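/- Let n be a positive integer and Λ = (λ_1 ≥ ⋯ ≥ λ_r) a partition of 2n in which every odd part occurs with even multiplicity, with dual partition Λ̃ = (λ̃_1, …, λ̃_t). Then 4·Σ_{j=1}^n (2j − n(Λ, 2j)) = 4n² + 2n − Σ_j λ̃_j² − #{i : λ_i is odd}; equivalently Σ_{j=1}^n (2j − n(Λ, 2j)) = ½·(dim Sp_{2n} − d), where dim Sp_{2n} = 2n² + n and d = ½(Σ_j λ̃_j² + #{i : λ_i odd}) is the dimension of the centralizer in Sp_{2n}(ℂ) of a nilpotent element of Jordan type Λ. -/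

import Mathlib

/-- `nIdx Λ j` is the index `a` (1-based) such that
`λ₁ + ⋯ + λ_{a-1} < j ≤ λ₁ + ⋯ + λ_a`, i.e. the least `a` with
`j ≤ λ₁ + ⋯ + λ_a`. -/
noncomputable def nIdx (Λ : List ℕ) (j : ℕ) : ℕ := sInf {a : ℕ | j ≤ (Λ.take a).sum}

lemma prefixSum_mono (Λ : List ℕ) : Monotone fun a => (Λ.take a).sum := by
  apply monotone_nat_of_le_succ
  intro a
  by_cases h : a < Λ.length
  · rw [List.sum_take_succ Λ a h]; omega
  · rw [List.take_of_length_le (by omega), List.take_of_length_le (by omega)]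

lemma prefixSum_le (Λ : List ℕ) (a : ℕ) : (Λ.take a).sum ≤ Λ.sum :=
  (List.take_sublist a Λ).sum_le_sum (fun _ _ => Nat.zero_le _)

lemma nIdx_eq (Λ : List ℕ) (m : ℕ) (hm : 1 ≤ m) (hmS : m ≤ Λ.sum) :
    nIdx Λ m = ((Finset.range (Λ.length + 1)).filter
      (fun a => (Λ.take a).sum < m)).card := by
  have hne : {a : ℕ | m ≤ (Λ.take a).sum}.Nonempty :=
    ⟨Λ.length, by simpa [List.take_length] using hmS⟩
  have h0 : m ≤ (Λ.take (nIdx Λ m)).sum := Nat.sInf_mem hne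
  have hle : nIdx Λ m ≤ Λ.length :=
    Nat.sInf_le (by simpa [List.take_length] using hmS)
  have hfilt : (Finset.range (Λ.length + 1)).filter (fun a => (Λ.take a).sum < m)
      = Finset.range (nIdx Λ m) := by
    ext a
    simp only [Finset.mem_filter, Finset.mem_range]
    constructor
    · rintro ⟨-, h2⟩
      by_contra hc
      have : m ≤ (Λ.take a).sum := le_trans h0 (prefixSum_mono Λ (not_lt.mp hc))
      omega
    · intro ha
      refine ⟨by omega, ?_⟩
      have := Nat.notMem_of_lt_sInf (show a < nIdx Λ m from ha)
      simp only [Set.mem_setOf_eq, not_le] at this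
      exact this
  rw [hfilt, Finset.card_range]
lemma sum_nIdx (n : ℕ) (Λ : List ℕ) (hsum : Λ.sum = 2 * n) :
    ∑ j ∈ Finset.Icc 1 n, nIdx Λ (2 * j)
      = ∑ a ∈ Finset.range (Λ.length + 1), (n - (Λ.take a).sum / 2) := by
  have h1 : ∀ j ∈ Finset.Icc 1 n, nIdx Λ (2 * j)
      = ∑ a ∈ Finset.range (Λ.length + 1),
          (if (Λ.take a).sum < 2 * j then 1 else 0) := by
    intro j hj
    rw [Finset.mem_Icc] at hj
    rw [nIdx_eq Λ (2 * j) (by omega) (by omega), Finset.sum_boole, Nat.cast_id]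
  rw [Finset.sum_congr rfl h1, Finset.sum_comm]
  refine Finset.sum_congr rfl fun a _ => ?_
  rw [Finset.sum_boole, Nat.cast_id]
  have hP : (Λ.take a).sum ≤ 2 * n := hsum ▸ prefixSum_le Λ a
  have hset : (Finset.Icc 1 n).filter (fun j => (Λ.take a).sum < 2 * j)
      = Finset.Ioc ((Λ.take a).sum / 2) n := by
    ext j
    simp only [Finset.mem_filter, Finset.mem_Icc, Finset.mem_Ioc]
    omega
  rw [hset, Nat.card_Ioc]

lemma sum_count (L : List ℕ) (M : ℕ) (hM : ∀ x ∈ L, x ≤ M) :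
    ∑ j ∈ Finset.Icc 1 M, L.countP (fun x => decide (j ≤ x)) = L.sum := by
  induction L with
  | nil => simp
  | cons x L ih =>
    simp only [List.countP_cons, List.sum_cons]
    rw [Finset.sum_add_distrib, ih (fun y hy => hM y (List.mem_cons_of_mem x hy))]
    have : ∑ j ∈ Finset.Icc 1 M, (if (decide (j ≤ x)) = true then 1 else 0) = x := by
      simp only [decide_eq_true_eq]
      rw [Finset.sum_boole, Nat.cast_id]
      have : (Finset.Icc 1 M).filter (fun j => j ≤ x) = Finset.Icc 1 x := by
        ext j
        simp only [Finset.mem_filter, Finset.mem_Icc]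
        have := hM x ((List.mem_cons_self (a := x) (l := L)))
        omega
      rw [this, Nat.card_Icc]; omega
    omega
lemma dualSq (L : List ℕ) (hs : L.Pairwise (· ≥ ·)) (M : ℕ) (hM : ∀ x ∈ L, x ≤ M) :
    ∑ j ∈ Finset.Icc 1 M, (L.countP (fun x => decide (j ≤ x)))^2
      + 2 * ∑ a ∈ Finset.range L.length, (L.take a).sum + L.sum
      = 2 * L.length * L.sum := by
  induction L with
  | nil => simp
  | cons x L ih =>
    have hsL : L.Pairwise (· ≥ ·) := hs.tail
    have hxL : ∀ y ∈ L, y ≤ x := fun y hy => List.rel_of_pairwise_cons hs hy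
    have hML : ∀ y ∈ L, y ≤ M := fun y hy => hM y (List.mem_cons_of_mem x hy)
    have ihL := ih hsL hML
    -- square expansion
    have hsq : ∀ j, ((x :: L).countP (fun y => decide (j ≤ y)))^2
        = (L.countP (fun y => decide (j ≤ y)))^2
          + (if j ≤ x then 2 * (L.countP (fun y => decide (j ≤ y))) + 1 else 0) := by
      intro j
      rw [List.countP_cons]
      by_cases h : j ≤ x <;> simp [h] <;> ring
    have h1 : ∑ j ∈ Finset.Icc 1 M, ((x :: L).countP (fun y => decide (j ≤ y)))^2
        = ∑ j ∈ Finset.Icc 1 M, (L.countP (fun y => decide (j ≤ y)))^2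
          + (2 * L.sum + x) := by
      simp only [hsq]
      rw [Finset.sum_add_distrib]
      congr 1
      rw [Finset.sum_ite, Finset.sum_const_zero, add_zero]
      have hf : (Finset.Icc 1 M).filter (fun j => j ≤ x) = Finset.Icc 1 x := by
        ext j
        simp only [Finset.mem_filter, Finset.mem_Icc]
        have := hM x ((List.mem_cons_self (a := x) (l := L)))
        omega
      rw [hf, Finset.sum_add_distrib, Finset.sum_const, Nat.card_Icc,
        ← Finset.mul_sum, sum_count L x hxL, smul_eq_mul]
      omega
    have h2 : ∑ a ∈ Finset.range (x :: L).length, ((x :: L).take a).sum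
        = L.length * x + ∑ a ∈ Finset.range L.length, (L.take a).sum := by
      simp only [List.length_cons]
      rw [Finset.sum_range_succ']
      simp only [List.take_succ_cons, List.sum_cons, List.take_zero, List.sum_nil]
      rw [Finset.sum_add_distrib, Finset.sum_const, Finset.card_range, smul_eq_mul]
      omega
    simp only [List.length_cons, List.sum_cons] at *
    rw [h1, h2]
    have hcast := congrArg (Nat.cast : ℕ → ℤ) ihL
    push_cast at hcast
    have : ((∑ j ∈ Finset.Icc 1 M, (L.countP (fun y => decide (j ≤ y)))^2
        + (2 * L.sum + x)
        + 2 * (L.length * x + ∑ a ∈ Finset.range L.length, (L.take a).sum)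
        + (x + L.sum) : ℕ) : ℤ)
        = ((2 * (L.length + 1) * (x + L.sum) : ℕ) : ℤ) := by
      push_cast
      linear_combination hcast
    exact_mod_cast this
lemma coreOdd : ∀ (N : ℕ) (L : List ℕ), L.length ≤ N → L.Pairwise (· ≥ ·) →
    (∀ x ∈ L, Odd x → Even (L.count x)) →
    L.countP (fun x => decide (Odd x))
      = 2 * ∑ a ∈ Finset.range L.length, ((L.take a).sum % 2) := by
  intro N
  induction N with
  | zero =>
    intro L hlen _ _
    interval_cases h : L.length
    · rw [List.length_eq_zero_iff] at h
      subst h; simp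
  | succ N ih =>
    intro L hlen hs hm
    match L with
    | [] => simp
    | x :: L =>
      by_cases hx : Odd x
      · -- odd case: second element is also x
        have hcount : Even ((x :: L).count x) := hm x ((List.mem_cons_self (a := x) (l := L))) hx
        rw [List.count_cons_self] at hcount
        have hxmem : x ∈ L := by
          rw [← List.count_pos_iff]
          rcases Nat.even_or_odd (L.count x) with h | h
          · exfalso; rw [Nat.even_iff] at hcount h; omega
          · rw [Nat.odd_iff] at h; omega
        match L with
        | [] => simp at hxmem
        | y :: L' =>
          have hyx : y = x := by
            have h1 : y ≤ x := List.rel_of_pairwise_cons hs (List.mem_cons_self (a := y) (l := L'))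
            have h2 : x ≤ y := by
              rcases List.mem_cons.mp hxmem with h | h
              · omega
              · exact List.rel_of_pairwise_cons hs.tail h
            omega
          subst hyx
          have hm' : ∀ z ∈ L', Odd z → Even (L'.count z) := by
            intro z hz hzodd
            have := hm z (by simp [hz]) hzodd
            rw [List.count_cons, List.count_cons] at this
            split_ifs at this with h1
            · rcases this with ⟨k, hk⟩
              exact ⟨k - 1, by omega⟩
            · simpa using this
          have hs' : L'.Pairwise (· ≥ ·) := hs.tail.tail
          have ihL' := ih L' (by simp at hlen ⊢; omega) hs' hm'
          rw [List.countP_cons, List.countP_cons, ihL']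
          have hd : (decide (Odd y)) = true := by simp [hx]
          rw [hd]
          have hx2 : y % 2 = 1 := Nat.odd_iff.mp hx
          simp only [List.length_cons]
          rw [Finset.sum_range_succ']
          simp only [List.take_succ_cons, List.sum_cons, List.take_zero, List.sum_nil,
            Nat.zero_mod, add_zero]
          rw [Finset.sum_range_succ']
          simp only [List.take_succ_cons, List.sum_cons, List.take_zero, List.sum_nil,
            add_zero]
          have hterm : ∀ a ∈ Finset.range L'.length,
              (y + (y + (L'.take a).sum)) % 2 = (L'.take a).sum % 2 :=
            fun a _ => by omega
          rw [Finset.sum_congr rfl hterm]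
          simp only [if_true]
          omega
      · -- even case
        have hxe : x % 2 = 0 := by
          rcases Nat.even_or_odd x with h | h
          · rwa [Nat.even_iff] at h
          · exact absurd h hx
        have hm' : ∀ z ∈ L, Odd z → Even (L.count z) := by
          intro z hz hzodd
          have := hm z (List.mem_cons_of_mem x hz) hzodd
          rw [List.count_cons] at this
          have hzx : ¬ (x = z) := by rintro rfl; exact hx hzodd
          simpa [hzx] using this
        have ihL := ih L (by simpa using Nat.lt_succ_iff.mp (Nat.lt_of_lt_of_le
          (by simp) hlen)) hs.tail hm'
        rw [List.countP_cons]
        have hd : (decide (Odd x)) = false := by simp [hx]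
        rw [hd]
        simp only [Bool.false_eq_true, if_false, add_zero]
        rw [ihL, List.length_cons, Finset.sum_range_succ']
        simp only [List.take_succ_cons, List.sum_cons, List.take_zero, List.sum_nil,
          Nat.zero_mod, add_zero]
        congr 1
        refine Finset.sum_congr rfl fun a _ => ?_
        omega

lemma gaussZ (n : ℕ) : (∑ j ∈ Finset.Icc 1 n, 2 * (j : ℤ)) = (n : ℤ) ^ 2 + n := by
  induction n with
  | zero => simp
  | succ m ihm =>
    rw [Finset.sum_Icc_succ_top (by omega), ihm]
    push_cast; ring

/-- For a partition `Λ = (λ₁ ≥ ⋯ ≥ λ_r)` of `2n` in which every odd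
part occurs with even multiplicity, with dual partition `Λ̃` (where `Λ̃_j = #{i : λ_i ≥ j}`,
which vanishes for `j > λ₁`, so the dual sum may be taken over `1 ≤ j ≤ 2n`):
`4·Σ_{j=1}^n (2j − n(Λ,2j)) = 4n² + 2n − Σ_j Λ̃_j² − #{i : λ_i odd}`. -/
theorem global_nilpotent_stmt12 (n : ℕ) (hn : 0 < n) (Λ : List ℕ)
    (hpos : ∀ x ∈ Λ, 0 < x) (hsorted : Λ.Pairwise (· ≥ ·)) (hsum : Λ.sum = 2 * n)
    (hoddmult : ∀ x ∈ Λ, Odd x → Even (Λ.count x)) :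
    4 * ∑ j ∈ Finset.Icc 1 n, (2 * (j : ℤ) - (nIdx Λ (2 * j) : ℤ)) =
      4 * (n : ℤ) ^ 2 + 2 * n
        - (∑ j ∈ Finset.Icc 1 (2 * n), ((Λ.countP (fun x => decide (j ≤ x)) : ℤ)) ^ 2)
        - Λ.countP (fun x => decide (Odd x)) := by
  classical
  set r := Λ.length with hr
  have hPle : ∀ a, (Λ.take a).sum ≤ 2 * n := fun a => hsum ▸ prefixSum_le Λ a
  have hDiv : ∀ a, (Λ.take a).sum / 2 ≤ n := fun a => by
    have := hPle a; omega
  have hPr : (Λ.take r).sum = 2 * n := by rw [hr, List.take_length, hsum]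
  -- ℕ facts
  have E1 := sum_nIdx n Λ hsum
  have hM : ∀ x ∈ Λ, x ≤ 2 * n := fun x hx =>
    hsum ▸ List.single_le_sum (fun _ _ => Nat.zero_le _) x hx
  have E3 := dualSq Λ hsorted (2 * n) hM
  rw [hsum] at E3
  have E4 := coreOdd Λ.length Λ le_rfl hsorted hoddmult
  -- cast E3
  have z3 : (∑ j ∈ Finset.Icc 1 (2 * n), ((Λ.countP (fun x => decide (j ≤ x)) : ℤ)) ^ 2)
      + 2 * (∑ a ∈ Finset.range r, (((Λ.take a).sum : ℕ) : ℤ)) + 2 * (n : ℤ)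
      = 2 * (r : ℤ) * (2 * n) := by exact_mod_cast E3
  -- cast E4
  have z4 : ((Λ.countP (fun x => decide (Odd x)) : ℤ))
      = 2 * ∑ a ∈ Finset.range r, (((Λ.take a).sum % 2 : ℕ) : ℤ) := by
    exact_mod_cast E4
  -- div/mod relation summed over range (r+1)
  have zDM : 2 * (∑ a ∈ Finset.range (r + 1), (((Λ.take a).sum / 2 : ℕ) : ℤ))
      + ∑ a ∈ Finset.range (r + 1), (((Λ.take a).sum % 2 : ℕ) : ℤ)
      = ∑ a ∈ Finset.range (r + 1), (((Λ.take a).sum : ℕ) : ℤ) := by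
    rw [Finset.mul_sum, ← Finset.sum_add_distrib]
    exact Finset.sum_congr rfl fun a _ => by omega
  -- split top terms
  have zsplit1 : ∑ a ∈ Finset.range (r + 1), (((Λ.take a).sum : ℕ) : ℤ)
      = (∑ a ∈ Finset.range r, (((Λ.take a).sum : ℕ) : ℤ)) + 2 * (n : ℤ) := by
    rw [Finset.sum_range_succ, hPr]
    norm_num
  have zsplit2 : ∑ a ∈ Finset.range (r + 1), (((Λ.take a).sum % 2 : ℕ) : ℤ)
      = ∑ a ∈ Finset.range r, (((Λ.take a).sum % 2 : ℕ) : ℤ) := by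
    rw [Finset.sum_range_succ, hPr]
    norm_num
  -- cast E1
  have z1 : (∑ j ∈ Finset.Icc 1 n, ((nIdx Λ (2 * j) : ℕ) : ℤ))
      = ((r : ℤ) + 1) * n - ∑ a ∈ Finset.range (r + 1), (((Λ.take a).sum / 2 : ℕ) : ℤ) := by
    have hc := congrArg (Nat.cast : ℕ → ℤ) E1
    rw [Nat.cast_sum, Nat.cast_sum] at hc
    rw [hc, Finset.sum_congr rfl (fun a _ => Nat.cast_sub (hDiv a)),
      Finset.sum_sub_distrib, Finset.sum_const, Finset.card_range]
    push_cast
    ring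
  rw [Finset.sum_sub_distrib, gaussZ n, z1]
  linarith [z3, z4, zDM, zsplit1, zsplit2]
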